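/- Dichotomy for large approximating functions: Let ψ: ℕ → ℝ_{≥0} be such that ψ(q)/q → 0 as q → ∞, and fix δ > 0 such that ψ(q) ≥ δ for every q ∈ ℕ with ψ(q) ≠ 0. Let I_q ⊆ Z_q be an arbitrary sequence of subsets. Then the following are equivalent: (∃) there exists γ ∈ ℝ such that μ(limsup_{q→∞} E_q^I(γ,ψ)) = 1; (∀) for every γ ∈ ℝ one has μ(limsup_{q→∞} E_q^I(γ,ψ)) = 1. -/

import Mathlib

open MeasureTheory Filter
open scoped ENNReal Topology

/-- Distance from a real number to the nearest integer. -/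
noncomputable def natDist (x : ℝ) : ℝ := |x - (round x : ℝ)|

/-- The set `E_q^I(γ, ψ)` of points `x ∈ [0,1]` with `‖x - (a+γ)/q‖ ≤ ψ(q)/q`
for some `a ∈ I_q`. -/
noncomputable def EsetI (I : ℕ → Finset ℕ) (γ : ℝ) (ψ : ℕ → ℝ) (q : ℕ) : Set ℝ :=
  {x ∈ Set.Icc (0 : ℝ) 1 | ∃ a ∈ I q, natDist (x - ((a : ℝ) + γ) / q) ≤ ψ q / q}

lemma natDist_le_iff {y r : ℝ} : natDist y ≤ r ↔ ∃ m : ℤ, |y - (m : ℝ)| ≤ r :=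
  ⟨fun h => ⟨round y, h⟩, fun ⟨m, hm⟩ => le_trans (round_le y m) hm⟩

lemma EsetI_eq (I : ℕ → Finset ℕ) (γ : ℝ) (ψ : ℕ → ℝ) (q : ℕ) :
    EsetI I γ ψ q = Set.Icc (0 : ℝ) 1 ∩
      ⋃ a ∈ I q, ⋃ m : ℤ,
        Set.Icc (((a : ℝ) + γ) / q + m - ψ q / q) (((a : ℝ) + γ) / q + m + ψ q / q) := by
  ext x
  simp only [EsetI, Set.mem_setOf_eq, Set.mem_inter_iff, Set.mem_iUnion, Set.mem_Icc,
    exists_prop]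
  refine and_congr_right fun _ => ?_
  constructor
  · rintro ⟨a, ha, hd⟩
    rcases natDist_le_iff.1 hd with ⟨m, hm⟩
    rw [abs_le] at hm
    exact ⟨a, ha, m, by constructor <;> linarith [hm.1, hm.2]⟩
  · rintro ⟨a, ha, m, h1, h2⟩
    exact ⟨a, ha, natDist_le_iff.2 ⟨m, abs_le.2 ⟨by linarith, by linarith⟩⟩⟩

lemma EsetI_measurable (I : ℕ → Finset ℕ) (γ : ℝ) (ψ : ℕ → ℝ) (q : ℕ) :
    MeasurableSet (EsetI I γ ψ q) := by
  rw [EsetI_eq]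
  exact measurableSet_Icc.inter
    ((I q).finite_toSet.measurableSet_biUnion fun a _ =>
      .iUnion fun m => measurableSet_Icc)

lemma EsetI_null (I : ℕ → Finset ℕ) (γ : ℝ) (ψ : ℕ → ℝ) (q : ℕ) (hq : ψ q = 0) :
    volume (EsetI I γ ψ q) = 0 := by
  have hsub : EsetI I γ ψ q ⊆ ⋃ a ∈ I q, ⋃ m : ℤ, {((a : ℝ) + γ) / q + m} := by
    rintro x ⟨hx, a, ha, hd⟩
    rcases natDist_le_iff.1 hd with ⟨m, hm⟩
    rw [hq, zero_div] at hm
    have : x = ((a : ℝ) + γ) / q + m := by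
      have h0 := abs_nonneg (x - ((a : ℝ) + γ) / q - m)
      have : |x - ((a : ℝ) + γ) / q - m| = 0 := le_antisymm hm h0
      have := abs_eq_zero.1 this
      linarith
    exact Set.mem_biUnion ha (Set.mem_iUnion.2 ⟨m, this⟩)
  refine measure_mono_null hsub ?_
  refine Set.Countable.measure_zero ?_ _
  exact (I q : Set ℕ).to_countable.biUnion fun a _ =>
    Set.countable_iUnion fun m => Set.countable_singleton _

lemma limsup_EsetI_subset (I : ℕ → Finset ℕ) (γ : ℝ) (ψ : ℕ → ℝ) :
    limsup (fun q => EsetI I γ ψ q) atTop ⊆ Set.Icc (0 : ℝ) 1 := by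
  intro x hx
  rw [mem_limsup_iff_frequently_mem] at hx
  rcases hx.exists with ⟨q, hq⟩
  exact hq.1

lemma limsup_EsetI_measurable (I : ℕ → Finset ℕ) (γ : ℝ) (ψ : ℕ → ℝ) :
    MeasurableSet (limsup (fun q => EsetI I γ ψ q) atTop) :=
  MeasurableSet.measurableSet_limsup fun q => EsetI_measurable I γ ψ q

lemma limsup_subset_union (s t n : ℕ → Set ℝ) (h : ∀ q, s q ⊆ t q ∪ n q) :
    limsup s atTop ⊆ limsup t atTop ∪ ⋃ q, n q := by
  intro x hx
  by_cases hn : ∃ q, x ∈ n q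
  · exact Or.inr (Set.mem_iUnion.2 hn)
  push_neg at hn
  left
  rw [mem_limsup_iff_frequently_mem] at hx ⊢
  exact hx.mono fun q hq => (h q hq).resolve_right (hn q)

/-- The Cassels-type scaling lemma: the limsup set for `ψ/2` has full measure
provided the one for `ψ` does. -/
lemma cassels_half (ψ : ℕ → ℝ) (hψ0 : ∀ q, 0 ≤ ψ q)
    (hψq : Tendsto (fun q => ψ q / q) atTop (nhds 0))
    (δ : ℝ) (hδ : 0 < δ) (hψδ : ∀ q, ψ q ≠ 0 → δ ≤ ψ q)
    (I : ℕ → Finset ℕ) (hI : ∀ q, ∀ a ∈ I q, a < q) (γ : ℝ)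
    (h : volume (limsup (fun q => EsetI I γ ψ q) atTop) = 1) :
    volume (limsup (fun q => EsetI I γ (fun r => ψ r / 2) q) atTop) = 1 := by
  classical
  set B : Set ℝ := limsup (fun q => EsetI I γ (fun r => ψ r / 2) q) atTop with hBdef
  have hBsub : B ⊆ Set.Icc (0 : ℝ) 1 := limsup_EsetI_subset I γ _
  have hBmeas : MeasurableSet B := limsup_EsetI_measurable I γ _
  have hBle : volume B ≤ 1 := by
    refine (measure_mono hBsub).trans ?_
    simp [Real.volume_Icc]
  by_contra hne
  have hBlt : volume B < 1 := lt_of_le_of_ne hBle hne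
  -- the complement of B in [0,1] has positive measure
  have hDpos : volume (Set.Icc (0 : ℝ) 1 \ B) ≠ 0 := by
    intro h0
    have hge : (1 : ℝ≥0∞) ≤ volume B := by
      calc (1 : ℝ≥0∞) = volume (Set.Icc (0 : ℝ) 1) := by simp [Real.volume_Icc]
        _ ≤ volume (B ∪ (Set.Icc (0 : ℝ) 1 \ B)) := by
            refine measure_mono fun x hx => ?_
            by_cases hxB : x ∈ B
            exacts [Or.inl hxB, Or.inr ⟨hx, hxB⟩]
        _ ≤ volume B + volume (Set.Icc (0 : ℝ) 1 \ B) := measure_union_le _ _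
        _ = volume B := by rw [h0, add_zero]
    exact absurd hge (not_le.2 hBlt)
  -- cover the complement by the sets D N
  have hcover : Set.Icc (0 : ℝ) 1 \ B ⊆
      ⋃ N : ℕ, (Set.Icc (0 : ℝ) 1 ∩
        ⋂ q, ⋂ (_ : N ≤ q), (EsetI I γ (fun r => ψ r / 2) q)ᶜ) := by
    rintro x ⟨hx, hxB⟩
    rw [hBdef, mem_limsup_iff_frequently_mem, Filter.not_frequently] at hxB
    obtain ⟨N, hN⟩ := eventually_atTop.1 hxB
    exact Set.mem_iUnion.2 ⟨N, hx, Set.mem_iInter₂.2 fun q hq => hN q hq⟩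
  obtain ⟨N, hND⟩ : ∃ N : ℕ, volume (Set.Icc (0 : ℝ) 1 ∩
      ⋂ q, ⋂ (_ : N ≤ q), (EsetI I γ (fun r => ψ r / 2) q)ᶜ) ≠ 0 := by
    by_contra hall
    push_neg at hall
    exact hDpos (measure_mono_null hcover (measure_iUnion_null hall))
  set D : Set ℝ := Set.Icc (0 : ℝ) 1 ∩
      ⋂ q, ⋂ (_ : N ≤ q), (EsetI I γ (fun r => ψ r / 2) q)ᶜ with hDdef
  -- the "bad" null set where ψ vanishes
  set Z : Set ℝ := ⋃ q, ⋃ (_ : ψ q = 0), EsetI I γ ψ q with hZdef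
  have hZnull : volume Z = 0 :=
    measure_iUnion_null fun q => measure_iUnion_null fun hq => EsetI_null I γ ψ q hq
  have hZmeas : MeasurableSet Z :=
    MeasurableSet.iUnion fun q => MeasurableSet.iUnion fun _ => EsetI_measurable I γ ψ q
  set A : Set ℝ := limsup (fun q => EsetI I γ ψ q) atTop with hAdef
  have hAsub : A ⊆ Set.Icc (0 : ℝ) 1 := limsup_EsetI_subset I γ ψ
  have hAmeas : MeasurableSet A := limsup_EsetI_measurable I γ ψ
  have hdiffA : volume (Set.Icc (0 : ℝ) 1 \ A) = 0 := by
    rw [measure_diff hAsub hAmeas.nullMeasurableSet (by rw [h]; exact ENNReal.one_ne_top), h]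
    simp [Real.volume_Icc]
  -- the good set D2
  set D2 : Set ℝ := D ∩ (A ∩ Zᶜ) with hD2def
  have hD2meas : MeasurableSet D2 := by
    refine (measurableSet_Icc.inter ?_).inter (hAmeas.inter hZmeas.compl)
    exact MeasurableSet.iInter fun q => MeasurableSet.iInter fun _ =>
      (EsetI_measurable I γ _ q).compl
  have hDdiff : volume (D \ (A ∩ Zᶜ)) = 0 := by
    refine measure_mono_null ?_ (measure_union_null hdiffA hZnull)
    rintro y ⟨hyD, hyT⟩
    by_cases hyA : y ∈ A
    · right
      by_contra hyZ
      exact hyT ⟨hyA, hyZ⟩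
    · exact Or.inl ⟨hyD.1, hyA⟩
  have hD2ne : volume D2 ≠ 0 := by
    intro h0
    refine hND (le_antisymm ?_ zero_le)
    calc volume D ≤ volume (D ∩ (A ∩ Zᶜ)) + volume (D \ (A ∩ Zᶜ)) :=
          measure_le_inter_add_diff _ _ _
      _ = 0 := by rw [← hD2def, h0, hDdiff, add_zero]
  -- a density point of D2 inside D2
  obtain ⟨x, hxD2, hxT⟩ : ∃ x ∈ D2, Tendsto
      (fun rr => volume (D2 ∩ Metric.closedBall x rr) / volume (Metric.closedBall x rr))
      (𝓝[>] 0) (𝓝 1) := by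
    by_contra hno
    push_neg at hno
    have hae := Besicovitch.ae_tendsto_measure_inter_div_of_measurableSet
      (volume : Measure ℝ) hD2meas
    rw [MeasureTheory.ae_iff] at hae
    refine hD2ne (measure_mono_null ?_ hae)
    intro y hy
    simp only [Set.mem_setOf_eq]
    rw [Set.indicator_of_mem hy, Pi.one_apply]
    exact hno y hy
  -- eventually the density ratio exceeds 3/4
  have hc1 : (ENNReal.ofReal (3 / 4) : ℝ≥0∞) < 1 := by
    rw [← ENNReal.ofReal_one]
    exact ENNReal.ofReal_lt_ofReal_iff (by norm_num) |>.2 (by norm_num)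
  have hev : ∀ᶠ rr in 𝓝[>] (0 : ℝ), ENNReal.ofReal (3 / 4) <
      volume (D2 ∩ Metric.closedBall x rr) / volume (Metric.closedBall x rr) :=
    hxT.eventually (eventually_gt_nhds hc1)
  obtain ⟨ε, hεmem, hεsub⟩ := mem_nhdsGT_iff_exists_Ioo_subset.1 hev
  have hε : (0 : ℝ) < ε := hεmem
  -- choose a large q with x in the big set
  have hxA : x ∈ A := hxD2.2.1
  have hxZ : x ∉ Z := hxD2.2.2
  have hxD : x ∈ D := hxD2.1
  have hfreq : ∃ᶠ q in atTop, x ∈ EsetI I γ ψ q :=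
    mem_limsup_iff_frequently_mem.1 hxA
  have hev2 : ∀ᶠ q in atTop, N ≤ q ∧ ψ q / q < ε / 2 := by
    filter_upwards [eventually_ge_atTop N,
      hψq.eventually (eventually_lt_nhds (by positivity : (0 : ℝ) < ε / 2))] with q h1 h2
    exact ⟨h1, h2⟩
  obtain ⟨q, hxq, hNq, hsmallq⟩ : ∃ q, x ∈ EsetI I γ ψ q ∧ N ≤ q ∧ ψ q / q < ε / 2 := by
    obtain ⟨q, h1, h2, h3⟩ := (hfreq.and_eventually hev2).exists
    exact ⟨q, h1, h2, h3⟩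
  have hψqne : ψ q ≠ 0 := by
    intro h0
    exact hxZ (Set.mem_iUnion.2 ⟨q, Set.mem_iUnion.2 ⟨h0, hxq⟩⟩)
  obtain ⟨hxIcc, a, ha, hd⟩ := hxq
  have hq0 : (0 : ℝ) < q := by exact_mod_cast Nat.zero_lt_of_lt (hI q a ha)
  set rq : ℝ := ψ q / q with hrq
  have hrpos : 0 < rq := div_pos (lt_of_lt_of_le hδ (hψδ q hψqne)) hq0
  set c₀ : ℝ := ((a : ℝ) + γ) / q with hc₀
  set m : ℤ := round (x - c₀) with hm
  have hxm : |x - c₀ - m| ≤ rq := hd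
  -- the inner interval K
  set K : Set ℝ := Set.Icc (c₀ + m - rq / 2) (c₀ + m + rq / 2) with hK
  have hKF : ∀ y ∈ K, y ∈ Set.Icc (0 : ℝ) 1 → y ∈ EsetI I γ (fun r => ψ r / 2) q := by
    intro y hy hyIcc
    refine ⟨hyIcc, a, ha, natDist_le_iff.2 ⟨m, ?_⟩⟩
    rw [Set.mem_Icc] at hy
    have : |y - c₀ - m| ≤ rq / 2 := abs_le.2 ⟨by linarith [hy.1], by linarith [hy.2]⟩
    calc |y - c₀ - m| ≤ rq / 2 := this
      _ = ψ q / 2 / q := by rw [hrq]; ring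
  have hKD2 : ∀ y ∈ K, y ∉ D2 := by
    intro y hyK hyD2
    have hyIcc : y ∈ Set.Icc (0 : ℝ) 1 := hyD2.1.1
    have hyF : y ∈ EsetI I γ (fun r => ψ r / 2) q := hKF y hyK hyIcc
    have : y ∉ EsetI I γ (fun r => ψ r / 2) q :=
      Set.mem_iInter₂.1 hyD2.1.2 q hNq
    exact this hyF
  have hKball : K ⊆ Metric.closedBall x (2 * rq) := by
    intro y hy
    rw [Set.mem_Icc] at hy
    rw [Metric.mem_closedBall, Real.dist_eq]
    have h1 : |y - (c₀ + m)| ≤ rq / 2 := abs_le.2 ⟨by linarith [hy.1], by linarith [hy.2]⟩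
    have h2 : |(c₀ + m) - x| ≤ rq := by
      rw [show (c₀ + m) - x = -(x - c₀ - m) by ring, abs_neg]
      exact hxm
    calc |y - x| = |(y - (c₀ + m)) + ((c₀ + m) - x)| := by ring_nf
      _ ≤ |y - (c₀ + m)| + |(c₀ + m) - x| := abs_add_le _ _
      _ ≤ rq / 2 + rq := add_le_add h1 h2
      _ ≤ 2 * rq := by linarith
  -- measure computation
  have volK : volume K = ENNReal.ofReal rq := by
    rw [hK, Real.volume_Icc]
    congr 1
    ring
  have volcb : volume (Metric.closedBall x (2 * rq)) = ENNReal.ofReal (4 * rq) := by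
    rw [Real.volume_closedBall]
    congr 1
    ring
  have hsubset : D2 ∩ Metric.closedBall x (2 * rq) ⊆ Metric.closedBall x (2 * rq) \ K := by
    rintro y ⟨hy1, hy2⟩
    exact ⟨hy2, fun hyK => hKD2 y hyK hy1⟩
  have hvoldiff : volume (Metric.closedBall x (2 * rq) \ K) = ENNReal.ofReal (3 * rq) := by
    rw [measure_diff hKball measurableSet_Icc.nullMeasurableSet
      (by rw [volK]; exact ENNReal.ofReal_ne_top), volK, volcb,
      ← ENNReal.ofReal_sub _ hrpos.le]
    congr 1
    ring
  have hratio : volume (D2 ∩ Metric.closedBall x (2 * rq)) /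
      volume (Metric.closedBall x (2 * rq)) ≤ ENNReal.ofReal (3 / 4) := by
    have h1 : volume (D2 ∩ Metric.closedBall x (2 * rq)) ≤ ENNReal.ofReal (3 * rq) := by
      rw [← hvoldiff]
      exact measure_mono hsubset
    calc volume (D2 ∩ Metric.closedBall x (2 * rq)) / volume (Metric.closedBall x (2 * rq))
        ≤ ENNReal.ofReal (3 * rq) / ENNReal.ofReal (4 * rq) := by
          rw [volcb]
          exact ENNReal.div_le_div_right h1 _
      _ = ENNReal.ofReal (3 * rq / (4 * rq)) := by
          rw [ENNReal.ofReal_div_of_pos (by positivity)]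
      _ = ENNReal.ofReal (3 / 4) := by
          congr 1
          field_simp
  -- contradiction
  have hmem : (2 * rq) ∈ Set.Ioo (0 : ℝ) ε := ⟨by positivity, by linarith⟩
  exact absurd (hεsub hmem) (not_lt.2 hratio)

/-- Full measure for `γ` transfers to `γ + t` for small `t`. -/
lemma full_shift (ψ : ℕ → ℝ) (hψ0 : ∀ q, 0 ≤ ψ q)
    (hψq : Tendsto (fun q => ψ q / q) atTop (nhds 0))
    (δ : ℝ) (hδ : 0 < δ) (hψδ : ∀ q, ψ q ≠ 0 → δ ≤ ψ q)
    (I : ℕ → Finset ℕ) (hI : ∀ q, ∀ a ∈ I q, a < q) (γ t : ℝ) (ht : |t| ≤ δ / 2)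
    (h : volume (limsup (fun q => EsetI I γ ψ q) atTop) = 1) :
    volume (limsup (fun q => EsetI I (γ + t) ψ q) atTop) = 1 := by
  have h2 := cassels_half ψ hψ0 hψq δ hδ hψδ I hI γ h
  have hnull : ∀ q, volume (if ψ q = 0 then EsetI I γ (fun r => ψ r / 2) q else ∅) = 0 := by
    intro q
    by_cases hq : ψ q = 0
    · rw [if_pos hq]
      exact EsetI_null I γ _ q (by simp [hq])
    · simp [hq]
  have hsub : ∀ q, EsetI I γ (fun r => ψ r / 2) q ⊆
      EsetI I (γ + t) ψ q ∪ (if ψ q = 0 then EsetI I γ (fun r => ψ r / 2) q else ∅) := by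
    intro q x hx
    by_cases hq : ψ q = 0
    · right; rw [if_pos hq]; exact hx
    · left
      obtain ⟨hxI, a, ha, hd⟩ := hx
      have hqpos : 0 < q := Nat.zero_lt_of_lt (hI q a ha)
      have hq0 : (0 : ℝ) < q := by exact_mod_cast hqpos
      rcases natDist_le_iff.1 hd with ⟨m, hm⟩
      refine ⟨hxI, a, ha, natDist_le_iff.2 ⟨m, ?_⟩⟩
      have hδψ : δ ≤ ψ q := hψδ q hq
      have key : ((a : ℝ) + (γ + t)) / q = ((a : ℝ) + γ) / q + t / q := by ring
      rw [key]
      have h1 : |x - (((a : ℝ) + γ) / q + t / q) - m| ≤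
          |x - ((a : ℝ) + γ) / q - m| + |t| / q := by
        have : x - (((a : ℝ) + γ) / q + t / q) - m =
            (x - ((a : ℝ) + γ) / q - m) + (-(t / q)) := by ring
        rw [this]
        refine (abs_add_le _ _).trans ?_
        rw [abs_neg, abs_div, abs_of_pos hq0]
      have h2' : ψ q / 2 / q + (δ / 2) / q ≤ ψ q / q := by
        rw [← add_div, div_le_div_iff_of_pos_right hq0]
        linarith
      have h3 : |t| / q ≤ (δ / 2) / q := by
        gcongr
      calc |x - (((a : ℝ) + γ) / q + t / q) - m|
          ≤ |x - ((a : ℝ) + γ) / q - m| + |t| / q := h1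
        _ ≤ ψ q / 2 / q + (δ / 2) / q := add_le_add hm h3
        _ ≤ ψ q / q := h2'
  have hls := limsup_subset_union _ _ _ hsub
  have hN : volume (⋃ q, (if ψ q = 0 then EsetI I γ (fun r => ψ r / 2) q else ∅)) = 0 :=
    measure_iUnion_null hnull
  have hle : (1 : ℝ≥0∞) ≤ volume (limsup (fun q => EsetI I (γ + t) ψ q) atTop) := by
    calc (1 : ℝ≥0∞) = volume (limsup (fun q => EsetI I γ (fun r => ψ r / 2) q) atTop) := h2.symm
      _ ≤ volume (limsup (fun q => EsetI I (γ + t) ψ q) atTop ∪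
            ⋃ q, (if ψ q = 0 then EsetI I γ (fun r => ψ r / 2) q else ∅)) :=
          measure_mono hls
      _ ≤ volume (limsup (fun q => EsetI I (γ + t) ψ q) atTop) +
            volume (⋃ q, (if ψ q = 0 then EsetI I γ (fun r => ψ r / 2) q else ∅)) :=
          measure_union_le _ _
      _ = volume (limsup (fun q => EsetI I (γ + t) ψ q) atTop) := by rw [hN, add_zero]
  refine le_antisymm ?_ hle
  calc volume (limsup (fun q => EsetI I (γ + t) ψ q) atTop)
      ≤ volume (Set.Icc (0 : ℝ) 1) := measure_mono (limsup_EsetI_subset I (γ + t) ψ)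
    _ = 1 := by simp [Real.volume_Icc]

/-- **Dichotomy for large approximating functions** (Theorem `dichotomy`): if `ψ(q)/q → 0`
and `ψ` is bounded below by `δ > 0` on its support, then the limsup set has full Lebesgue
measure for some shift `γ` if and only if it has full measure for every shift `γ`. -/
theorem dichotomy_large_psi
    (ψ : ℕ → ℝ) (hψ0 : ∀ q, 0 ≤ ψ q)
    (hψq : Tendsto (fun q => ψ q / q) atTop (nhds 0))
    (δ : ℝ) (hδ : 0 < δ) (hψδ : ∀ q, ψ q ≠ 0 → δ ≤ ψ q)
    (I : ℕ → Finset ℕ) (hI : ∀ q, ∀ a ∈ I q, a < q) :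
    (∃ γ : ℝ, volume (limsup (fun q => EsetI I γ ψ q) atTop) = 1) ↔
      ∀ γ : ℝ, volume (limsup (fun q => EsetI I γ ψ q) atTop) = 1 := by
  constructor
  · rintro ⟨γ, hγ⟩ γ'
    obtain ⟨n, hn⟩ := exists_nat_ge (|γ' - γ| / (δ / 2))
    set N : ℕ := n + 1 with hNdef
    have hN0 : (0 : ℝ) < N := by positivity
    set s : ℝ := (γ' - γ) / N with hs
    have hsmall : |s| ≤ δ / 2 := by
      rw [hs, abs_div, abs_of_pos hN0, div_le_iff₀ hN0]
      have h1 : |γ' - γ| ≤ n * (δ / 2) := by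
        rw [div_le_iff₀ (by positivity : (0:ℝ) < δ / 2)] at hn
        linarith
      have h2 : (n : ℝ) ≤ N := by
        rw [hNdef]; push_cast; linarith
      nlinarith [abs_nonneg (γ' - γ), hδ]
    have key : ∀ k : ℕ, volume (limsup (fun q => EsetI I (γ + k * s) ψ q) atTop) = 1 := by
      intro k
      induction k with
      | zero => simpa using hγ
      | succ k ih =>
        have := full_shift ψ hψ0 hψq δ hδ hψδ I hI (γ + k * s) s hsmall ih
        have heq : γ + k * s + s = γ + (k + 1 : ℕ) * s := by push_cast; ring
        rwa [heq] at this
    have := key N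
    have heq : γ + (N : ℝ) * s = γ' := by
      rw [hs]
      field_simp
      ring
    rwa [heq] at this
  · intro h
    exact ⟨0, h 0⟩
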